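/- Let g = g_{-1} ⊕ g_0 ⊕ g_1 be a |1|-graded simple Lie algebra with grading element E, Killing form K, and dim g_{-1} = d. Let (e_i) be a basis of g_{-1} and (ε^i) the basis of g_1 dual to it with respect to K, i.e. K(ε^i, e_j) = δ^i_j. Then ∑_{i=1}^d [ε^i, e_i] = (1/2)·E. -/

import Mathlib

open LinearMap

/-- In a `|1|`-graded simple Lie algebra with grading element `E`, if `(eᵢ)` is a basis
of `g₋₁` and `(εⁱ)` the Killing-dual basis of `g₁`, then `∑ᵢ ⁅εⁱ, eᵢ⁆ = (1/2) • E`. -/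
theorem sum_bracket_dual_basis_eq_half_grading_element
    {L : Type*} [LieRing L] [LieAlgebra ℝ L] [LieAlgebra.IsSimple ℝ L]
    [Module.Finite ℝ L]
    (gm g0 g1 : Submodule ℝ L)
    (hsup : gm ⊔ g0 ⊔ g1 = ⊤)
    (hind : ∀ x ∈ gm, ∀ y ∈ g0, ∀ z ∈ g1, x + y + z = 0 → x = 0 ∧ y = 0 ∧ z = 0)
    (hmm : ∀ x ∈ gm, ∀ y ∈ gm, ⁅x, y⁆ = 0)
    (hm0 : ∀ x ∈ gm, ∀ y ∈ g0, ⁅x, y⁆ ∈ gm)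
    (hm1 : ∀ x ∈ gm, ∀ y ∈ g1, ⁅x, y⁆ ∈ g0)
    (h00 : ∀ x ∈ g0, ∀ y ∈ g0, ⁅x, y⁆ ∈ g0)
    (h01 : ∀ x ∈ g0, ∀ y ∈ g1, ⁅x, y⁆ ∈ g1)
    (h11 : ∀ x ∈ g1, ∀ y ∈ g1, ⁅x, y⁆ = 0)
    -- grading element
    (E : L) (hE : E ∈ g0)
    (hEm : ∀ x ∈ gm, ⁅E, x⁆ = -x)
    (hE0 : ∀ x ∈ g0, ⁅E, x⁆ = 0)
    (hE1 : ∀ x ∈ g1, ⁅E, x⁆ = x)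
    -- the basis `(eᵢ)` of `g₋₁` and Killing-dual family `(εⁱ)` in `g₁`
    (d : ℕ) (e ε : Fin d → L)
    (he : ∀ i, e i ∈ gm) (hε : ∀ i, ε i ∈ g1)
    (hspan_e : Submodule.span ℝ (Set.range e) = gm)
    (hspan_ε : Submodule.span ℝ (Set.range ε) = g1)
    (hdual : ∀ i j, killingForm ℝ L (ε i) (e j) = if i = j then 1 else 0) :
    ∑ i, ⁅ε i, e i⁆ = (2 : ℝ)⁻¹ • E := by
  classical
  rcases Nat.eq_zero_or_pos d with hd | hd
  · -- degenerate case: `L = g0`, `E` is central, hence zero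
    subst hd
    have hg0 : g0 = ⊤ := by
      have hgm : gm = ⊥ := by rw [← hspan_e, Set.range_eq_empty, Submodule.span_empty]
      have hg1 : g1 = ⊥ := by rw [← hspan_ε, Set.range_eq_empty, Submodule.span_empty]
      rw [hgm, hg1] at hsup; simpa using hsup
    have hE0' : E = 0 := by
      have hc : E ∈ LieAlgebra.center ℝ L := by
        rw [LieModule.mem_maxTrivSubmodule]
        intro y
        rw [← lie_skew, hE0 y (hg0 ▸ Submodule.mem_top), neg_zero]
      rw [LieAlgebra.center_eq_bot ℝ L] at hc
      simpa using hc
    simp [hE0']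
  -- reconstruction of elements of `gm` from dual pairings
  have hrec_m : ∀ v ∈ gm, ∑ j, killingForm ℝ L (ε j) v • e j = v := by
    intro v hv
    rw [← hspan_e] at hv
    induction hv using Submodule.span_induction with
    | mem w hw =>
        obtain ⟨k, rfl⟩ := hw
        simp [hdual, ite_smul]
    | zero => simp
    | add w u hw hu ihw ihu =>
        simp only [map_add, add_smul, Finset.sum_add_distrib, ihw, ihu]
    | smul a w hw ihw =>
        simp only [map_smul, smul_eq_mul, mul_smul, ← Finset.smul_sum, ihw]
  -- reconstruction of elements of `g1` from dual pairings
  have hrec_1 : ∀ w ∈ g1, ∑ i, killingForm ℝ L w (e i) • ε i = w := by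
    intro w hw
    rw [← hspan_ε] at hw
    induction hw using Submodule.span_induction with
    | mem w hw =>
        obtain ⟨k, rfl⟩ := hw
        simp [hdual, ite_smul]
    | zero => simp
    | add w u hw hu ihw ihu =>
        simp only [map_add, LinearMap.add_apply, add_smul, Finset.sum_add_distrib, ihw, ihu]
    | smul a w hw ihw =>
        simp only [map_smul, LinearMap.smul_apply, smul_eq_mul, mul_smul,
          ← Finset.smul_sum, ihw]
  -- Killing orthogonality of gm, g1 against g0
  have hK_m0 : ∀ a ∈ gm, ∀ b ∈ g0, killingForm ℝ L a b = 0 := by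
    intro a ha b hb
    have h := LieModule.traceForm_apply_lie_apply ℝ L L a E b
    rw [hE0 b hb] at h
    have ha' : ⁅a, E⁆ = a := by rw [← lie_skew, hEm a ha, neg_neg]
    simpa [ha'] using h
  have hK_10 : ∀ a ∈ g1, ∀ b ∈ g0, killingForm ℝ L a b = 0 := by
    intro a ha b hb
    have h := LieModule.traceForm_apply_lie_apply ℝ L L a E b
    rw [hE0 b hb] at h
    have ha' : ⁅a, E⁆ = -a := by rw [← lie_skew, hE1 a ha]
    simp only [ha', map_neg, LinearMap.neg_apply, map_zero, neg_eq_zero] at h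
    exact h
  -- the sum lies in g0
  have hS0 : (∑ i, ⁅ε i, e i⁆) ∈ g0 := by
    refine Submodule.sum_mem _ fun i _ => ?_
    rw [← lie_skew]
    exact Submodule.neg_mem _ (hm1 (e i) (he i) (ε i) (hε i))
  -- decomposition of an arbitrary element
  have hdec : ∀ v : L, ∃ a ∈ gm, ∃ b ∈ g0, ∃ c ∈ g1, v = a + b + c := by
    intro v
    have hv : v ∈ gm ⊔ g0 ⊔ g1 := hsup ▸ Submodule.mem_top
    rw [Submodule.mem_sup] at hv
    obtain ⟨y, hy, c, hc, rfl⟩ := hv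
    rw [Submodule.mem_sup] at hy
    obtain ⟨a, ha, b, hb, rfl⟩ := hy
    exact ⟨a, ha, b, hb, c, hc, rfl⟩
  -- the key trace identity
  have hkey : ∀ x ∈ g0,
      killingForm ℝ L E x = 2 * killingForm ℝ L x (∑ i, ⁅ε i, e i⁆) := by
    intro x hx
    set N : Module.End ℝ L := LieAlgebra.ad ℝ L E with hN
    set adx : Module.End ℝ L := LieAlgebra.ad ℝ L x with hadx
    set F : L →ₗ[ℝ] L := (2:ℝ)⁻¹ • ((N ∘ₗ N - N) ∘ₗ adx) with hF
    set G : L →ₗ[ℝ] L := (2:ℝ)⁻¹ • ((N ∘ₗ N + N) ∘ₗ adx) with hG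
    have hNm : ∀ a ∈ gm, ⁅E, ⁅x, a⁆⁆ = -⁅x, a⁆ := by
      intro a ha
      refine hEm _ ?_
      rw [← lie_skew]
      exact Submodule.neg_mem _ (hm0 a ha x hx)
    have hN0 : ∀ b ∈ g0, ⁅E, ⁅x, b⁆⁆ = 0 := by
      intro b hb
      exact hE0 _ (h00 x hx b hb)
    have hN1 : ∀ c ∈ g1, ⁅E, ⁅x, c⁆⁆ = ⁅x, c⁆ := by
      intro c hc
      exact hE1 _ (h01 x hx c hc)
    have hFval : ∀ a ∈ gm, ∀ b ∈ g0, ∀ c ∈ g1, F (a + b + c) = ⁅x, a⁆ := by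
      intro a ha b hb c hc
      simp only [hF, LinearMap.smul_apply, LinearMap.comp_apply, LinearMap.sub_apply,
        map_add, hadx, hN, LieAlgebra.ad_apply, hNm a ha, hN0 b hb, hN1 c hc,
        lie_neg, lie_zero]
      module
    have hGval : ∀ a ∈ gm, ∀ b ∈ g0, ∀ c ∈ g1, G (a + b + c) = ⁅x, c⁆ := by
      intro a ha b hb c hc
      simp only [hG, LinearMap.smul_apply, LinearMap.comp_apply, LinearMap.add_apply,
        map_add, hadx, hN, LieAlgebra.ad_apply, hNm a ha, hN0 b hb, hN1 c hc,
        lie_neg, lie_zero]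
      module
    have hFmem : ∀ v : L, F v ∈ gm := by
      intro v
      obtain ⟨a, ha, b, hb, c, hc, rfl⟩ := hdec v
      rw [hFval a ha b hb c hc, ← lie_skew]
      exact Submodule.neg_mem _ (hm0 a ha x hx)
    have hGmem : ∀ v : L, G v ∈ g1 := by
      intro v
      obtain ⟨a, ha, b, hb, c, hc, rfl⟩ := hdec v
      rw [hGval a ha b hb c hc]
      exact h01 x hx c hc
    have hFe : ∀ j, F (e j) = ⁅x, e j⁆ := by
      intro j
      have := hFval (e j) (he j) 0 (Submodule.zero_mem _) 0 (Submodule.zero_mem _)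
      simpa using this
    have hGε : ∀ i, G (ε i) = ⁅x, ε i⁆ := by
      intro i
      have := hGval 0 (Submodule.zero_mem _) 0 (Submodule.zero_mem _) (ε i) (hε i)
      simpa using this
    -- trace of F
    have htrF : LinearMap.trace ℝ L F = ∑ j, killingForm ℝ L (ε j) ⁅x, e j⁆ := by
      have hFeq : F = ∑ j, dualTensorHom ℝ L L (((killingForm ℝ L (ε j)) ∘ₗ F) ⊗ₜ[ℝ] e j) := by
        ext v
        rw [LinearMap.sum_apply]
        simp only [dualTensorHom_apply, LinearMap.comp_apply]
        exact (hrec_m (F v) (hFmem v)).symm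
      rw [hFeq, map_sum]
      refine Finset.sum_congr rfl fun j _ => ?_
      rw [LinearMap.trace_eq_contract_apply, contractLeft_apply, LinearMap.comp_apply, hFe]
    -- trace of G
    have htrG : LinearMap.trace ℝ L G = ∑ i, killingForm ℝ L ⁅x, ε i⁆ (e i) := by
      have hGeq : G = ∑ i, dualTensorHom ℝ L L ((((killingForm ℝ L).flip (e i)) ∘ₗ G) ⊗ₜ[ℝ] ε i) := by
        ext v
        rw [LinearMap.sum_apply]
        simp only [dualTensorHom_apply, LinearMap.comp_apply, LinearMap.flip_apply]
        exact (hrec_1 (G v) (hGmem v)).symm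
      rw [hGeq, map_sum]
      refine Finset.sum_congr rfl fun i _ => ?_
      rw [LinearMap.trace_eq_contract_apply, contractLeft_apply, LinearMap.comp_apply, hGε]
      rfl
    -- the difference G - F is ad E ∘ ad x
    have hGF : G - F = N ∘ₗ adx := by
      ext v
      simp only [hF, hG, LinearMap.sub_apply, LinearMap.smul_apply, LinearMap.comp_apply,
        LinearMap.add_apply]
      module
    have hKEx : killingForm ℝ L E x = LinearMap.trace ℝ L G - LinearMap.trace ℝ L F := by
      rw [killingForm_apply_apply, ← hN, ← hadx, ← hGF, map_sub]
    -- rewrite the two sums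
    have t1 : ∀ i, killingForm ℝ L ⁅x, ε i⁆ (e i) = killingForm ℝ L x ⁅ε i, e i⁆ :=
      fun i => LieModule.traceForm_apply_lie_apply ℝ L L x (ε i) (e i)
    have t2 : ∀ i, killingForm ℝ L (ε i) ⁅x, e i⁆ = - killingForm ℝ L x ⁅ε i, e i⁆ := by
      intro i
      have h := LieModule.traceForm_apply_lie_apply ℝ L L (ε i) x (e i)
      rw [← h]
      have : ⁅ε i, x⁆ = -⁅x, ε i⁆ := by rw [← lie_skew]
      rw [this, map_neg, LinearMap.neg_apply, t1]
    rw [hKEx, htrF, htrG, map_sum]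
    simp only [t1, t2, Finset.sum_neg_distrib, sub_neg_eq_add]
    ring
  -- conclude via nondegeneracy-from-simplicity
  have hT : ∀ y : L, killingForm ℝ L y (∑ i, ⁅ε i, e i⁆ - (2:ℝ)⁻¹ • E) = 0 := by
    intro y
    obtain ⟨a, ha, b, hb, c, hc, rfl⟩ := hdec y
    have hb' : killingForm ℝ L b (∑ i, ⁅ε i, e i⁆ - (2:ℝ)⁻¹ • E) = 0 := by
      have h1 : killingForm ℝ L b E = killingForm ℝ L E b := LieModule.traceForm_comm ℝ L L b E
      have h2 := hkey b hb
      rw [map_sub, map_smul, h1, h2, smul_eq_mul]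
      ring
    have ha' : killingForm ℝ L a (∑ i, ⁅ε i, e i⁆ - (2:ℝ)⁻¹ • E) = 0 := by
      rw [map_sub, map_smul, hK_m0 a ha _ hS0, hK_m0 a ha E hE]
      simp
    have hc' : killingForm ℝ L c (∑ i, ⁅ε i, e i⁆ - (2:ℝ)⁻¹ • E) = 0 := by
      rw [map_sub, map_smul, hK_10 c hc _ hS0, hK_10 c hc E hE]
      simp
    rw [map_add, map_add, LinearMap.add_apply, LinearMap.add_apply, ha', hb', hc']
    ring
  have hmem : (∑ i, ⁅ε i, e i⁆ - (2:ℝ)⁻¹ • E) ∈ LieIdeal.killingCompl ℝ L ⊤ := by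
    rw [LieIdeal.mem_killingCompl]
    exact fun y _ => hT y
  rcases LieAlgebra.IsSimple.eq_bot_or_eq_top (LieIdeal.killingCompl ℝ L ⊤) with hbot | htop
  · rw [hbot] at hmem
    have := (LieSubmodule.mem_bot _).mp hmem
    exact sub_eq_zero.mp this
  · exfalso
    have hmem0 : e ⟨0, hd⟩ ∈ LieIdeal.killingCompl ℝ L ⊤ := by
      rw [htop]; trivial
    rw [LieIdeal.mem_killingCompl] at hmem0
    have := hmem0 (ε ⟨0, hd⟩) trivial
    rw [hdual] at this
    simp at this
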